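/- Let f : B(z,R) → ℝ (B(z,R) ⊂ ℝ²) be continuous and satisfy the maximum and minimum principle on circles: for every 0 < ρ ≤ R, osc over the closed ball B(z,ρ) of f equals osc over the circle ∂B(z,ρ) of f. Suppose also f ∈ W^{1,2}(B(z,2r)) with 2r ≤ R. Then osc_{B(z,r)} f ≤ (1/r) ∫_{B(z,2r)} |Df| dx, and consequently osc_{B(z,r)} f / r ≤ C (⨍_{B(z,2r)} |Df|² dx)^{1/2} for a universal constant C. -/

import Mathlib

open MeasureTheory

/-- Oscillation of `f` over a set `s`. -/
noncomputable def oscOn (f : EuclideanSpace ℝ (Fin 2) → ℝ)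
    (s : Set (EuclideanSpace ℝ (Fin 2))) : ℝ :=
  sSup (f '' s) - sInf (f '' s)

open Set
open scoped ENNReal Real
open MeasureTheory Set
open scoped ENNReal Real

lemma my_lintegral_comp_polarCoord_symm (g : ℝ × ℝ → ℝ≥0∞) :
    ∫⁻ p in polarCoord.target, ENNReal.ofReal p.1 * g (polarCoord.symm p) = ∫⁻ p, g p := by
  set B : ℝ × ℝ → ℝ × ℝ →L[ℝ] ℝ × ℝ := fun p =>
    LinearMap.toContinuousLinearMap (Matrix.toLin (Module.Basis.finTwoProd ℝ) (Module.Basis.finTwoProd ℝ)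
      !![Real.cos p.2, -p.1 * Real.sin p.2; Real.sin p.2, p.1 * Real.cos p.2])
  have A : ∀ p ∈ polarCoord.target, HasFDerivWithinAt polarCoord.symm (B p) polarCoord.target p :=
    fun p _ => (hasFDerivAt_polarCoord_symm p).hasFDerivWithinAt
  have B_det : ∀ p, (B p).det = p.1 := by
    intro p
    conv_rhs => rw [← one_mul p.1, ← Real.cos_sq_add_sin_sq p.2]
    simp only [B, neg_mul, LinearMap.det_toContinuousLinearMap, LinearMap.det_toLin,
      Matrix.det_fin_two_of, sub_neg_eq_add]
    ring
  symm
  calc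
    ∫⁻ p, g p = ∫⁻ p in polarCoord.source, g p := by
      rw [← setLIntegral_univ g]
      exact (setLIntegral_congr polarCoord_source_ae_eq_univ).symm
    _ = ∫⁻ p in polarCoord.symm '' polarCoord.target, g p := by
      rw [polarCoord.symm_image_target_eq_source]
    _ = ∫⁻ p in polarCoord.target, ENNReal.ofReal |(B p).det| * g (polarCoord.symm p) := by
      apply lintegral_image_eq_lintegral_abs_det_fderiv_mul volume
        polarCoord.open_target.measurableSet A polarCoord.symm.injOn g
    _ = ∫⁻ p in polarCoord.target, ENNReal.ofReal p.1 * g (polarCoord.symm p) := by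
      apply setLIntegral_congr_fun polarCoord.open_target.measurableSet
      intro p hp
      beta_reduce
      rw [B_det, abs_of_pos hp.1]

lemma myComplex_lintegral_comp_polarCoord_symm (g : ℂ → ℝ≥0∞) :
    ∫⁻ p in polarCoord.target, ENNReal.ofReal p.1 * g (Complex.polarCoord.symm p) = ∫⁻ w, g w := by
  rw [← (Complex.volume_preserving_equiv_real_prod.symm).lintegral_comp_emb
    Complex.measurableEquivRealProd.symm.measurableEmbedding, ← my_lintegral_comp_polarCoord_symm (fun q => g (Complex.measurableEquivRealProd.symm q))]
  rfl


noncomputable def e2 : ℂ ≃ₗᵢ[ℝ] EuclideanSpace ℝ (Fin 2) := Complex.orthonormalBasisOneI.repr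

lemma csSup_sub_csInf_le {S : Set ℝ} {D : ℝ} (hne : S.Nonempty)
    (hD : ∀ x ∈ S, ∀ y ∈ S, x - y ≤ D) : sSup S - sInf S ≤ D := by
  obtain ⟨x₀, hx₀⟩ := hne
  have h1 : sSup S ≤ D + sInf S := by
    apply csSup_le ⟨x₀, hx₀⟩
    intro x hx
    have h2 : x - D ≤ sInf S := by
      apply le_csInf ⟨x₀, hx₀⟩
      intro y hy
      have := hD x hx y hy; linarith
    linarith
  linarith

lemma sphere_param {z : EuclideanSpace ℝ (Fin 2)} {ρ : ℝ} (hρ : 0 < ρ) (θ : ℝ) :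
    e2 (e2.symm z + ρ * Complex.exp (θ * Complex.I)) ∈ Metric.sphere z ρ := by
  have h : e2 (e2.symm z + ρ * Complex.exp (θ * Complex.I))
      = z + e2 ((ρ : ℂ) * Complex.exp (θ * Complex.I)) := by
    rw [map_add, e2.apply_symm_apply]
  rw [Metric.mem_sphere, dist_eq_norm, h, add_sub_cancel_left, e2.norm_map]
  simp [Complex.norm_exp_ofReal_mul_I, abs_of_pos hρ, Complex.norm_real]

lemma circle_deriv {f : EuclideanSpace ℝ (Fin 2) → ℝ} {z : EuclideanSpace ℝ (Fin 2)}
    {s ρ : ℝ} (hρs : ρ < s)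
    (hdiff : DifferentiableOn ℝ f (Metric.ball z s)) (hρ : 0 < ρ) (θ : ℝ) :
    HasDerivAt (fun θ : ℝ => f (e2 (e2.symm z + ρ * Complex.exp (θ * Complex.I))))
      (fderiv ℝ f (e2 (e2.symm z + ρ * Complex.exp (θ * Complex.I)))
        (e2 ((ρ : ℂ) * Complex.exp (θ * Complex.I) * Complex.I))) θ := by
  have h0 : HasDerivAt (fun θ : ℝ => (θ : ℂ)) 1 θ := by
    exact Complex.ofRealCLM.hasDerivAt (x := θ)
  have h1 : HasDerivAt (fun θ : ℝ => (θ : ℂ) * Complex.I) Complex.I θ := by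
    simpa using h0.mul_const Complex.I
  have h2 : HasDerivAt (fun θ : ℝ => e2.symm z + ρ * Complex.exp (θ * Complex.I))
      ((ρ : ℂ) * Complex.exp (θ * Complex.I) * Complex.I) θ := by
    have := ((h1.cexp).const_mul (ρ : ℂ)).const_add (e2.symm z)
    refine this.congr_deriv ?_
    ring
  have h3 : HasDerivAt (fun θ : ℝ => e2 (e2.symm z + ρ * Complex.exp (θ * Complex.I)))
      (e2 ((ρ : ℂ) * Complex.exp (θ * Complex.I) * Complex.I)) θ := by
    exact e2.toContinuousLinearEquiv.hasFDerivAt.comp_hasDerivAt θ h2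
  have hx : e2 (e2.symm z + ρ * Complex.exp (θ * Complex.I)) ∈ Metric.ball z s :=
    Metric.sphere_subset_ball hρs (sphere_param hρ θ)
  have hf : HasFDerivAt f (fderiv ℝ f (e2 (e2.symm z + ρ * Complex.exp (θ * Complex.I))))
      (e2 (e2.symm z + ρ * Complex.exp (θ * Complex.I))) :=
    (hdiff.differentiableAt (Metric.isOpen_ball.mem_nhds hx)).hasFDerivAt
  exact hf.comp_hasDerivAt θ h3

lemma circle_osc {f : EuclideanSpace ℝ (Fin 2) → ℝ} {z : EuclideanSpace ℝ (Fin 2)}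
    {R r : ℝ} (hr : 0 < r) (hR : 2 * r ≤ R)
    (hcont : ContinuousOn f (Metric.closedBall z R))
    (hosc : ∀ ρ : ℝ, 0 < ρ → ρ ≤ R →
      oscOn f (Metric.closedBall z ρ) = oscOn f (Metric.sphere z ρ))
    (hdiff : DifferentiableOn ℝ f (Metric.ball z (2 * r)))
    {ρ : ℝ} (hρ : ρ ∈ Ioo r (2 * r)) :
    ENNReal.ofReal (oscOn f (Metric.ball z r)) ≤
      ∫⁻ θ in Ioo (-π) π,
        ENNReal.ofReal (ρ * ‖fderiv ℝ f (e2 (e2.symm z + ρ * Complex.exp (θ * Complex.I)))‖) := by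
  have hρ0 : 0 < ρ := hr.trans hρ.1
  have hρR : ρ ≤ R := le_trans hρ.2.le hR
  set eh : ℝ → EuclideanSpace ℝ (Fin 2) :=
    fun θ => e2 (e2.symm z + ρ * Complex.exp (θ * Complex.I)) with heh
  set φ : ℝ → ℝ := fun θ => ρ * ‖fderiv ℝ f (eh θ)‖ with hφ
  set A : ℝ≥0∞ := ∫⁻ θ in Ioo (-π) π, ENNReal.ofReal (φ θ) with hA
  show ENNReal.ofReal (oscOn f (Metric.ball z r)) ≤ A
  by_cases hAtop : A = ⊤
  · exact hAtop ▸ le_top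
  -- continuity of eh
  have heh_cont : Continuous eh := by
    apply e2.continuous.comp
    exact continuous_const.add (continuous_const.mul
      ((Complex.continuous_ofReal.mul continuous_const).cexp))
  have heh_sphere : ∀ θ, eh θ ∈ Metric.sphere z ρ := fun θ => sphere_param hρ0 θ
  -- measurability of φ
  have hφ_meas : Measurable φ :=
    measurable_const.mul (((measurable_fderiv ℝ f).comp heh_cont.measurable).norm)
  have hφ_nonneg : ∀ θ, 0 ≤ φ θ := fun θ => mul_nonneg hρ0.le (norm_nonneg _)
  -- integrability of φ on Ioo, then on Icc
  have hφ_int : IntegrableOn φ (Ioo (-π) π) := by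
    refine ⟨hφ_meas.aestronglyMeasurable, ?_⟩
    rw [hasFiniteIntegral_iff_ofReal (Filter.Eventually.of_forall hφ_nonneg)]
    exact lt_top_iff_ne_top.2 hAtop
  have hIccIoo : (volume : Measure ℝ).restrict (Ioo (-π) π)
      = volume.restrict (Icc (-π) π) := Measure.restrict_congr_set Ioo_ae_eq_Icc
  have hφ_int' : IntegrableOn φ (Icc (-π) π) := by
    rw [IntegrableOn, ← hIccIoo]; exact hφ_int
  -- the derivative
  set g : ℝ → ℝ := fun θ => f (eh θ) with hg
  set g' : ℝ → ℝ := fun θ =>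
    fderiv ℝ f (eh θ) (e2 ((ρ : ℂ) * Complex.exp (θ * Complex.I) * Complex.I)) with hg'
  have hderiv : ∀ θ : ℝ, HasDerivAt g (g' θ) θ :=
    fun θ => circle_deriv hρ.2 hdiff hρ0 θ
  have hg'_le : ∀ θ, ‖g' θ‖ ≤ φ θ := by
    intro θ
    calc ‖g' θ‖ ≤ ‖fderiv ℝ f (eh θ)‖ * ‖e2 ((ρ : ℂ) * Complex.exp (θ * Complex.I) * Complex.I)‖ :=
          ContinuousLinearMap.le_opNorm _ _
    _ ≤ φ θ := by
        rw [e2.norm_map]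
        simp only [norm_mul, Complex.norm_real, Complex.norm_I,
          Complex.norm_exp_ofReal_mul_I, Real.norm_eq_abs, abs_of_pos hρ0]
        rw [hφ]
        ring_nf
        exact le_refl _
  have hg'_meas : Measurable g' := by
    have h1 : Measurable fun θ => fderiv ℝ f (eh θ) :=
      (measurable_fderiv ℝ f).comp heh_cont.measurable
    have h2 : Continuous fun θ : ℝ => e2 ((ρ : ℂ) * Complex.exp (θ * Complex.I) * Complex.I) := by
      apply e2.continuous.comp
      exact (continuous_const.mul ((Complex.continuous_ofReal.mul continuous_const).cexp)).mul
        continuous_const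
    exact isBoundedBilinearMap_apply.continuous.measurable.comp (h1.prodMk h2.measurable)
  -- FTC bound
  have hbound : ∀ a ∈ Icc (-π) π, ∀ b ∈ Icc (-π) π, a ≤ b →
      |g b - g a| ≤ ∫ θ in Ioo (-π) π, φ θ := by
    intro a ha b hb hab
    have hIoc_sub : Ioc a b ⊆ Icc (-π) π := fun t ht =>
      ⟨le_trans ha.1 ht.1.le, le_trans ht.2 hb.2⟩
    have hg'_intOn : IntegrableOn g' (Ioc a b) := by
      refine Integrable.mono' (hφ_int'.mono_set hIoc_sub) hg'_meas.aestronglyMeasurable ?_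
      exact Filter.Eventually.of_forall hg'_le
    have hII : IntervalIntegrable g' volume a b := by
      rw [intervalIntegrable_iff, uIoc_of_le hab]; exact hg'_intOn
    have hFTC : ∫ t in a..b, g' t = g b - g a :=
      intervalIntegral.integral_eq_sub_of_hasDerivAt (fun t _ => hderiv t) hII
    rw [← hFTC]
    have hφ_II : IntervalIntegrable φ volume a b := by
      rw [intervalIntegrable_iff, uIoc_of_le hab]; exact hφ_int'.mono_set hIoc_sub
    calc |∫ t in a..b, g' t| ≤ ∫ t in a..b, |g' t| :=
          intervalIntegral.abs_integral_le_integral_abs hab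
      _ ≤ ∫ t in a..b, φ t := by
          apply intervalIntegral.integral_mono_on hab hII.abs hφ_II
          intro t _
          exact hg'_le t
      _ = ∫ t in Ioc a b, φ t := intervalIntegral.integral_of_le hab
      _ ≤ ∫ θ in Icc (-π) π, φ θ := by
          apply setIntegral_mono_set hφ_int'
            (Filter.Eventually.of_forall hφ_nonneg) (HasSubset.Subset.eventuallyLE hIoc_sub)
      _ = ∫ θ in Ioo (-π) π, φ θ := by rw [← hIccIoo]
  obtain ⟨M, hM⟩ := (isCompact_closedBall z R).exists_bound_of_continuousOn hcont
  have hg_cont : Continuous g := by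
    apply hcont.comp_continuous heh_cont
    intro θ
    exact Metric.closedBall_subset_closedBall hρR
      (Metric.sphere_subset_closedBall (heh_sphere θ))
  -- image of the sphere
  have himg : f '' Metric.sphere z ρ = g '' Icc (-π) π := by
    apply Subset.antisymm
    · rintro _ ⟨x, hx, rfl⟩
      have hxz : ‖e2.symm x - e2.symm z‖ = ρ := by
        rw [← map_sub, e2.symm.norm_map, ← dist_eq_norm]
        exact Metric.mem_sphere.1 hx
      set w : ℂ := e2.symm x - e2.symm z with hw
      have habs : ‖w‖ = ρ := hxz
      refine ⟨w.arg, ⟨(Complex.arg_mem_Ioc w).1.le, (Complex.arg_mem_Ioc w).2⟩, ?_⟩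
      show f (e2 (e2.symm z + ρ * Complex.exp (w.arg * Complex.I))) = f x
      have : (ρ : ℂ) * Complex.exp (w.arg * Complex.I) = w := by
        rw [← habs]
        exact Complex.norm_mul_exp_arg_mul_I w
      rw [this, hw]
      have : e2.symm z + (e2.symm x - e2.symm z) = e2.symm x := by ring
      rw [this, e2.apply_symm_apply]
    · rintro _ ⟨θ, hθ, rfl⟩
      exact ⟨eh θ, heh_sphere θ, rfl⟩
  -- oscillation bound on the sphere
  have hosc3 : oscOn f (Metric.sphere z ρ) ≤ ∫ θ in Ioo (-π) π, φ θ := by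
    rw [oscOn, himg]
    have h0mem : (0 : ℝ) ∈ Icc (-π) π := by
      constructor <;> [linarith [Real.pi_pos]; linarith [Real.pi_pos]]
    apply csSup_sub_csInf_le ⟨g 0, mem_image_of_mem g h0mem⟩
    rintro x ⟨a, ha, rfl⟩ y ⟨b, hb, rfl⟩
    rcases le_total a b with hab | hba
    · have := hbound a ha b hb hab
      rw [abs_sub_comm] at this
      exact (le_abs_self _).trans this
    · exact (le_abs_self _).trans (hbound b hb a ha hba)
  -- monotonicity of oscillation
  have hsub1 : Metric.ball z r ⊆ Metric.closedBall z ρ :=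
    (Metric.ball_subset_ball hρ.1.le).trans Metric.ball_subset_closedBall
  have hsub2 : Metric.closedBall z ρ ⊆ Metric.closedBall z R :=
    Metric.closedBall_subset_closedBall hρR
  have hneb : (Metric.ball z r).Nonempty := Metric.nonempty_ball.2 hr
  have bddA : BddAbove (f '' Metric.closedBall z ρ) := by
    refine ⟨M, ?_⟩
    rintro _ ⟨x, hx, rfl⟩
    exact (le_abs_self _).trans (hM x (hsub2 hx))
  have bddB : BddBelow (f '' Metric.closedBall z ρ) := by
    refine ⟨-M, ?_⟩
    rintro _ ⟨x, hx, rfl⟩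
    have := hM x (hsub2 hx)
    rw [Real.norm_eq_abs] at this
    linarith [neg_abs_le (f x), abs_nonneg (f x)]
  have h4 : oscOn f (Metric.ball z r) ≤ oscOn f (Metric.closedBall z ρ) := by
    apply sub_le_sub
    · exact csSup_le_csSup bddA (hneb.image f) (image_mono hsub1)
    · exact csInf_le_csInf bddB (hneb.image f) (image_mono hsub1)
  have h5 : oscOn f (Metric.ball z r) ≤ ∫ θ in Ioo (-π) π, φ θ := by
    rw [hosc ρ hρ0 hρR] at h4
    exact h4.trans hosc3
  calc ENNReal.ofReal (oscOn f (Metric.ball z r)) ≤ ENNReal.ofReal (∫ θ in Ioo (-π) π, φ θ) :=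
        ENNReal.ofReal_le_ofReal h5
    _ = A := ofReal_integral_eq_lintegral_ofReal hφ_int (Filter.Eventually.of_forall hφ_nonneg)

lemma my_CS {α : Type*} [MeasurableSpace α] {μ : Measure α} [IsFiniteMeasure μ] {g : α → ℝ}
    (hg : ∀ x, 0 ≤ g x) (h1 : Integrable g μ) (h2 : Integrable (fun x => g x ^ 2) μ) :
    ∫ x, g x ∂μ ≤ Real.sqrt ((μ univ).toReal * ∫ x, g x ^ 2 ∂μ) := by
  set m : ℝ := (μ univ).toReal with hm
  have hm0 : 0 ≤ m := ENNReal.toReal_nonneg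
  set I1 : ℝ := ∫ x, g x ∂μ with hI1
  set I2 : ℝ := ∫ x, g x ^ 2 ∂μ with hI2
  have hI2_0 : 0 ≤ I2 := integral_nonneg fun x => sq_nonneg _
  rcases le_or_gt I1 0 with h | h
  · exact h.trans (Real.sqrt_nonneg _)
  have key : ∀ t : ℝ, 0 < t → I1 ≤ (t * I2 + m / t) / 2 := by
    intro t ht
    have hpt : ∀ x, g x ≤ (t * g x ^ 2 + 1 / t) / 2 := by
      intro x
      have hid : (t * g x ^ 2 + 1 / t) / 2 - g x = (t * g x - 1) ^ 2 / (2 * t) := by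
        field_simp; ring
      have hQ : 0 ≤ (t * g x - 1) ^ 2 / (2 * t) :=
        div_nonneg (sq_nonneg _) (by linarith)
      linarith
    calc I1 ≤ ∫ x, (t * g x ^ 2 + 1 / t) / 2 ∂μ := by
          apply integral_mono h1 (((h2.const_mul t).add (integrable_const _)).div_const 2) hpt
      _ = (t * I2 + m / t) / 2 := by
          rw [integral_div, integral_add (h2.const_mul t) (integrable_const _),
            integral_const_mul, integral_const, smul_eq_mul, measureReal_def, ← hm]
          ring
  have hI2_pos : 0 < I2 := by
    rcases hI2_0.lt_or_eq with h' | h'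
    · exact h'
    · exfalso
      have : (fun x => g x ^ 2) =ᵐ[μ] 0 := by
        rw [← integral_eq_zero_iff_of_nonneg (fun x => sq_nonneg (g x)) h2]
        exact h'.symm
      have hg0 : g =ᵐ[μ] 0 := by
        filter_upwards [this] with x hx
        have : g x ^ 2 = 0 := hx
        simpa using pow_eq_zero_iff (n := 2) (by norm_num) |>.1 this
      have : I1 = 0 := by
        rw [hI1, integral_congr_ae hg0]; simp
      linarith
  have hbd := key (I1 / I2) (div_pos h hI2_pos)
  have hsq : I1 ^ 2 ≤ m * I2 := by
    have h0 : I1 / I2 * I2 = I1 := div_mul_cancel₀ _ hI2_pos.ne'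
    rw [h0] at hbd
    have heq : m / (I1 / I2) = m * I2 / I1 := by
      field_simp
    rw [heq] at hbd
    have h1' : I1 ≤ m * I2 / I1 := by linarith
    have h2' := (le_div_iff₀ h).1 h1'
    nlinarith [h2']
  calc I1 ≤ Real.sqrt (I1 ^ 2) := by rw [Real.sqrt_sq h.le]
    _ ≤ Real.sqrt (m * I2) := Real.sqrt_le_sqrt hsq

lemma polar_symm_eq (p : ℝ × ℝ) :
    Complex.polarCoord.symm p = (p.1 : ℂ) * Complex.exp (p.2 * Complex.I) := by
  simp [Complex.polarCoord_symm_apply, Complex.exp_mul_I, Complex.ofReal_cos,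
    Complex.ofReal_sin]

theorem statement19 :
    ∃ C : ℝ, 0 < C ∧
      ∀ (z : EuclideanSpace ℝ (Fin 2)) (R r : ℝ) (f : EuclideanSpace ℝ (Fin 2) → ℝ),
        0 < r → 2 * r ≤ R →
        ContinuousOn f (Metric.closedBall z R) →
        (∀ ρ : ℝ, 0 < ρ → ρ ≤ R →
          oscOn f (Metric.closedBall z ρ) = oscOn f (Metric.sphere z ρ)) →
        DifferentiableOn ℝ f (Metric.ball z (2 * r)) →
        IntegrableOn (fun x => ‖fderiv ℝ f x‖ ^ 2) (Metric.ball z (2 * r)) →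
        (oscOn f (Metric.ball z r) ≤ (1 / r) * ∫ x in Metric.ball z (2 * r), ‖fderiv ℝ f x‖) ∧
        oscOn f (Metric.ball z r) / r
          ≤ C * Real.sqrt (⨍ x in Metric.ball z (2 * r), ‖fderiv ℝ f x‖ ^ 2) := by
  set κ : ℝ := (volume (Metric.ball (0 : EuclideanSpace ℝ (Fin 2)) 1)).toReal with hκ
  have hκ0 : 0 < κ :=
    ENNReal.toReal_pos (Metric.measure_ball_pos volume _ one_pos).ne' measure_ball_lt_top.ne
  refine ⟨4 * κ, by positivity, ?_⟩
  intro z R r f hr hR hcont hosc hdiff hint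
  set c : ℂ := e2.symm z with hc
  -- step 1 : integrability of the gradient norm
  have hmeasn : Measurable fun x : EuclideanSpace ℝ (Fin 2) => ‖fderiv ℝ f x‖ :=
    (measurable_fderiv ℝ f).norm
  have hL1 : IntegrableOn (fun x => ‖fderiv ℝ f x‖) (Metric.ball z (2 * r)) := by
    have hconst : IntegrableOn (fun _ : EuclideanSpace ℝ (Fin 2) => (1 : ℝ))
        (Metric.ball z (2 * r)) := integrableOn_const measure_ball_lt_top.ne
    refine Integrable.mono' ((hint.add hconst).div_const 2)
      hmeasn.aestronglyMeasurable ?_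
    filter_upwards with x
    rw [Real.norm_eq_abs, abs_of_nonneg (norm_nonneg _)]
    have h1 := sq_nonneg (‖fderiv ℝ f x‖ - 1)
    simp only [Pi.add_apply]
    nlinarith [norm_nonneg (fderiv ℝ f x)]
  set I1 : ℝ := ∫ x in Metric.ball z (2 * r), ‖fderiv ℝ f x‖ with hI1
  have hI1_0 : 0 ≤ I1 := integral_nonneg fun x => norm_nonneg _
  -- the polar integrand
  set ψ : ℝ × ℝ → ℝ≥0∞ := fun p =>
    ENNReal.ofReal (p.1 * ‖fderiv ℝ f (e2 (c + p.1 * Complex.exp (p.2 * Complex.I)))‖) with hψ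
  have hmap_cont : Continuous fun p : ℝ × ℝ =>
      e2 (c + (p.1 : ℂ) * Complex.exp ((p.2 : ℂ) * Complex.I)) := by
    apply e2.continuous.comp
    exact continuous_const.add ((Complex.continuous_ofReal.comp continuous_fst).mul
      (Complex.continuous_exp.comp
        ((Complex.continuous_ofReal.comp continuous_snd).mul continuous_const)))
  have hψ_meas : Measurable ψ :=
    (measurable_fst.mul (((measurable_fderiv ℝ f).comp hmap_cont.measurable).norm)).ennreal_ofReal
  -- step 2 : Tonelli + the circle estimate
  have step2 : ENNReal.ofReal (oscOn f (Metric.ball z r)) * ENNReal.ofReal r ≤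
      ∫⁻ p in Ioo r (2 * r) ×ˢ Ioo (-π) π, ψ p := by
    have htonelli : ∫⁻ p in Ioo r (2 * r) ×ˢ Ioo (-π) π, ψ p
        = ∫⁻ ρ in Ioo r (2 * r), ∫⁻ θ in Ioo (-π) π, ψ (ρ, θ) := by
      rw [Measure.volume_eq_prod, ← Measure.prod_restrict]
      exact lintegral_prod ψ hψ_meas.aemeasurable
    rw [htonelli]
    have hconst : ENNReal.ofReal (oscOn f (Metric.ball z r)) * ENNReal.ofReal r
        = ∫⁻ _ρ in Ioo r (2 * r), ENNReal.ofReal (oscOn f (Metric.ball z r)) := by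
      rw [setLIntegral_const, Real.volume_Ioo]
      congr 1
      congr 1
      ring
    rw [hconst]
    apply setLIntegral_mono (hψ_meas.lintegral_prod_right')
    intro ρ hρ
    exact circle_osc hr hR hcont hosc hdiff hρ
  -- step 3 : polar coordinates
  set G : ℂ → ℝ≥0∞ := (Metric.ball (0 : ℂ) (2 * r) \ Metric.closedBall 0 r).indicator
    (fun w => ENNReal.ofReal ‖fderiv ℝ f (e2 (c + w))‖) with hG
  have step3 : ∫⁻ p in Ioo r (2 * r) ×ˢ Ioo (-π) π, ψ p
      ≤ ∫⁻ p in polarCoord.target, ENNReal.ofReal p.1 * G (Complex.polarCoord.symm p) := by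
    have hsub : Ioo r (2 * r) ×ˢ Ioo (-π) π ⊆ polarCoord.target := by
      rintro ⟨ρ, θ⟩ ⟨h1, h2⟩
      exact ⟨mem_Ioi.2 (hr.trans h1.1), h2⟩
    refine le_trans (le_of_eq ?_) (lintegral_mono_set hsub)
    apply setLIntegral_congr_fun ((measurableSet_Ioo).prod (measurableSet_Ioo))
    intro p hp
    have hp1 : r < p.1 := hp.1.1
    have hp1' : p.1 < 2 * r := hp.1.2
    have hp0 : 0 < p.1 := hr.trans hp1
    have hnorm : ‖Complex.polarCoord.symm p‖ = p.1 := by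
      rw [polar_symm_eq]
      simp [Complex.norm_exp_ofReal_mul_I, Complex.norm_real, abs_of_pos hp0]
    have hmem : Complex.polarCoord.symm p ∈
        Metric.ball (0 : ℂ) (2 * r) \ Metric.closedBall 0 r := by
      constructor
      · rw [Metric.mem_ball, dist_zero_right, hnorm]
        exact hp1'
      · intro hmem'
        rw [Metric.mem_closedBall, dist_zero_right, hnorm] at hmem'
        linarith
    beta_reduce
    rw [hψ, hG, indicator_of_mem hmem, polar_symm_eq p, ← ENNReal.ofReal_mul hp0.le]
  -- step 4 : change of variables
  have step4 : ∫⁻ p in polarCoord.target, ENNReal.ofReal p.1 * G (Complex.polarCoord.symm p)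
      = ∫⁻ w, G w := myComplex_lintegral_comp_polarCoord_symm G
  -- step 5 : back to the euclidean ball
  have step5 : ∫⁻ w, G w ≤ ENNReal.ofReal I1 := by
    have hann : MeasurableSet (Metric.ball (0 : ℂ) (2 * r) \ Metric.closedBall 0 r) :=
      Metric.isOpen_ball.measurableSet.diff measurableSet_closedBall
    have e5_1 : ∫⁻ w, G w = ∫⁻ w in Metric.ball (0 : ℂ) (2 * r) \ Metric.closedBall 0 r,
        ENNReal.ofReal ‖fderiv ℝ f (e2 (c + w))‖ := by
      rw [hG]
      exact lintegral_indicator hann _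
    have e5_2 : ∫⁻ w in Metric.ball (0 : ℂ) (2 * r) \ Metric.closedBall 0 r,
          ENNReal.ofReal ‖fderiv ℝ f (e2 (c + w))‖
        ≤ ∫⁻ w in Metric.ball (0 : ℂ) (2 * r),
          ENNReal.ofReal ‖fderiv ℝ f (e2 (c + w))‖ := lintegral_mono_set diff_subset
    have hpre1 : (fun w : ℂ => c + w) ⁻¹' Metric.ball c (2 * r) = Metric.ball 0 (2 * r) := by
      ext w
      simp [Metric.mem_ball, dist_eq_norm, add_sub_cancel_left]
    have e5_3 : ∫⁻ w in Metric.ball (0 : ℂ) (2 * r), ENNReal.ofReal ‖fderiv ℝ f (e2 (c + w))‖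
        = ∫⁻ u in Metric.ball c (2 * r), ENNReal.ofReal ‖fderiv ℝ f (e2 u)‖ := by
      rw [← hpre1]
      exact (measurePreserving_add_left volume c).setLIntegral_comp_preimage_emb
        (measurableEmbedding_addLeft c) (fun u => ENNReal.ofReal ‖fderiv ℝ f (e2 u)‖)
        (Metric.ball c (2 * r))
    have hpre2 : e2 ⁻¹' Metric.ball z (2 * r) = Metric.ball c (2 * r) := by
      ext u
      have hd : dist (e2 u) z = dist u c := by
        conv_lhs => rw [← e2.apply_symm_apply z]
        rw [e2.dist_map]
      simp [Metric.mem_ball, hd, hc]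
    have e5_4 : ∫⁻ u in Metric.ball c (2 * r), ENNReal.ofReal ‖fderiv ℝ f (e2 u)‖
        = ∫⁻ x in Metric.ball z (2 * r), ENNReal.ofReal ‖fderiv ℝ f x‖ := by
      rw [← hpre2]
      have hmp : MeasurePreserving (⇑e2) volume volume :=
        Complex.orthonormalBasisOneI.measurePreserving_repr
      exact hmp.setLIntegral_comp_preimage_emb e2.toHomeomorph.measurableEmbedding
        (fun x => ENNReal.ofReal ‖fderiv ℝ f x‖) (Metric.ball z (2 * r))
    have e5_5 : ∫⁻ x in Metric.ball z (2 * r), ENNReal.ofReal ‖fderiv ℝ f x‖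
        = ENNReal.ofReal I1 :=
      (ofReal_integral_eq_lintegral_ofReal hL1
        (Filter.Eventually.of_forall fun x => norm_nonneg _)).symm
    rw [e5_1]
    exact e5_2.trans (le_of_eq (e5_3.trans (e5_4.trans e5_5)))
  -- oscillation is nonnegative
  have hosc_nonneg : 0 ≤ oscOn f (Metric.ball z r) := by
    obtain ⟨M, hM⟩ := (isCompact_closedBall z R).exists_bound_of_continuousOn hcont
    have hzmem : z ∈ Metric.ball z r := Metric.mem_ball_self hr
    have hsub : Metric.ball z r ⊆ Metric.closedBall z R :=
      (Metric.ball_subset_ball (by linarith)).trans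
        (Metric.ball_subset_closedBall.trans (Metric.closedBall_subset_closedBall hR))
    have bddA : BddAbove (f '' Metric.ball z r) := by
      refine ⟨M, ?_⟩
      rintro _ ⟨x, hx, rfl⟩
      exact (le_abs_self _).trans (hM x (hsub hx))
    have bddB : BddBelow (f '' Metric.ball z r) := by
      refine ⟨-M, ?_⟩
      rintro _ ⟨x, hx, rfl⟩
      have := hM x (hsub hx)
      rw [Real.norm_eq_abs] at this
      linarith [neg_abs_le (f x)]
    exact sub_nonneg.2 ((csInf_le bddB (mem_image_of_mem f hzmem)).trans
      (le_csSup bddA (mem_image_of_mem f hzmem)))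
  -- part 1
  have hmul : oscOn f (Metric.ball z r) * r ≤ I1 := by
    have hchain : ENNReal.ofReal (oscOn f (Metric.ball z r) * r) ≤ ENNReal.ofReal I1 := by
      rw [ENNReal.ofReal_mul hosc_nonneg]
      exact step2.trans (step3.trans (step4 ▸ step5))
    exact (ENNReal.ofReal_le_ofReal_iff hI1_0).1 hchain
  have hpart1 : oscOn f (Metric.ball z r) ≤ (1 / r) * I1 := by
    rw [one_div, inv_mul_eq_div]
    exact (le_div_iff₀ hr).2 hmul
  refine ⟨hpart1, ?_⟩
  -- part 2
  haveI : IsFiniteMeasure ((volume : Measure (EuclideanSpace ℝ (Fin 2))).restrict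
      (Metric.ball z (2 * r))) :=
    ⟨by rw [Measure.restrict_apply_univ]; exact measure_ball_lt_top⟩
  have hCS := my_CS (fun x => norm_nonneg (fderiv ℝ f x)) hL1 hint
  rw [Measure.restrict_apply_univ] at hCS
  set μt : ℝ := (volume (Metric.ball z (2 * r))).toReal with hμt
  set I2 : ℝ := ∫ x in Metric.ball z (2 * r), ‖fderiv ℝ f x‖ ^ 2 with hI2d
  have hI2_0 : 0 ≤ I2 := integral_nonneg fun x => sq_nonneg _
  have hμt_eq : μt = 4 * r ^ 2 * κ := by
    rw [hμt, Measure.addHaar_ball (volume : Measure (EuclideanSpace ℝ (Fin 2))) z (by linarith : (0:ℝ) ≤ 2 * r),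
      finrank_euclideanSpace_fin, ENNReal.toReal_mul, ENNReal.toReal_ofReal (by positivity)]
    rw [← hκ]
    ring
  have hμt_pos : 0 < μt := by rw [hμt_eq]; positivity
  have havg : (⨍ x in Metric.ball z (2 * r), ‖fderiv ℝ f x‖ ^ 2) = μt⁻¹ * I2 := by
    rw [setAverage_eq, smul_eq_mul, measureReal_def, ← hμt, ← hI2d]
  have hsqrt : Real.sqrt (μt * I2) = μt * Real.sqrt (μt⁻¹ * I2) := by
    conv_rhs => rw [← Real.sqrt_sq hμt_pos.le]
    rw [← Real.sqrt_mul (sq_nonneg μt)]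
    congr 1
    field_simp
    rw [Real.sqrt_sq hμt_pos.le]
    ring
  have h6 : oscOn f (Metric.ball z r) * r ≤ μt * Real.sqrt (μt⁻¹ * I2) := by
    rw [← hsqrt]
    exact hmul.trans hCS
  rw [havg, div_le_iff₀ hr]
  rw [hμt_eq] at h6
  nlinarith [h6, hr, Real.sqrt_nonneg (μt⁻¹ * I2)]
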